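/- Let 0 ≤ ε < 1/8, let u ∈ ℝ^d be a unit vector, and let M ∈ ℝ^(d×d) be a symmetric positive semidefinite matrix with Frobenius norm ‖M‖_F ≤ 1 and ⟨uuᵀ, M⟩_F ≥ 1-ε. If vvᵀ is a best rank-1 (Frobenius norm) approximation of M with v ≠ 0, then the unit vector û = v/‖v‖ satisfies ⟨u, û⟩² ≥ 1 - 8ε. -/

import Mathlib

open Matrix Finset

lemma expand_aux {d : ℕ} (M : Matrix (Fin d) (Fin d) ℝ) (w : Fin d → ℝ) :
    ∑ i, ∑ j, ((M - Matrix.vecMulVec w w) i j) ^ 2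
      = (∑ i, ∑ j, (M i j) ^ 2) - 2 * (∑ i, ∑ j, (w i * w j) * M i j)
        + (∑ i, w i ^ 2) ^ 2 := by
  have h1 : ∀ i j : Fin d, ((M - Matrix.vecMulVec w w) i j) ^ 2
      = M i j ^ 2 - 2 * ((w i * w j) * M i j) + w i ^ 2 * w j ^ 2 := by
    intro i j
    simp [Matrix.sub_apply, Matrix.vecMulVec_apply]
    ring
  simp_rw [h1, Finset.sum_add_distrib, Finset.sum_sub_distrib, ← Finset.mul_sum,
    ← Finset.sum_mul, sq]

set_option maxHeartbeats 1000000 in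
/-- Matrix rank-1 approximation: `0 ≤ ε < 1/8`, `u` a unit vector, `M` symmetric PSD with
Frobenius norm at most `1` and Frobenius correlation `⟨u uᵀ, M⟩_F ≥ 1 - ε`. If `v vᵀ` is a
best rank-1 approximation of `M` (in Frobenius norm) with `v ≠ 0`, then the unit vector
`û = v / ‖v‖` satisfies `⟨u, û⟩² ≥ 1 - 8 ε`. -/
theorem stmt16 {d : ℕ} (ε : ℝ) (hε0 : 0 ≤ ε) (hε : ε < 1 / 8)
    (u : Fin d → ℝ) (hu : u ⬝ᵥ u = 1)
    (M : Matrix (Fin d) (Fin d) ℝ) (hM : M.PosSemidef)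
    (hMF : Real.sqrt (∑ i, ∑ j, (M i j) ^ 2) ≤ 1)
    (hcorr : 1 - ε ≤ ∑ i, ∑ j, (Matrix.vecMulVec u u) i j * M i j)
    (v : Fin d → ℝ) (hv : v ≠ 0)
    (hbest : ∀ w : Fin d → ℝ,
      ∑ i, ∑ j, ((M - Matrix.vecMulVec v v) i j) ^ 2
        ≤ ∑ i, ∑ j, ((M - Matrix.vecMulVec w w) i j) ^ 2) :
    1 - 8 * ε ≤ (u ⬝ᵥ ((Real.sqrt (v ⬝ᵥ v))⁻¹ • v)) ^ 2 := by
  -- basic quantities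
  set t : ℝ := ∑ i, ∑ j, (u i * u j) * M i j with ht_def
  have ht : 1 - ε ≤ t := by
    simpa [Matrix.vecMulVec_apply] using hcorr
  have htpos : 0 < t := lt_of_lt_of_le (by linarith) ht
  set s : ℝ := v ⬝ᵥ v with hs_def
  have hs : 0 < s := by
    have h := dotProduct_self_eq_zero (v := v)
    have hnn : 0 ≤ s := Finset.sum_nonneg fun i _ => mul_self_nonneg _
    rcases hnn.lt_or_eq with h' | h'
    · exact h'
    · exact absurd (h.mp h'.symm) hv
  set b : ℝ := ∑ i, ∑ j, (v i * v j) * M i j with hb_def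
  -- b = vᵀ M v ≥ 0 by PSD
  have hb0 : 0 ≤ b := by
    have := hM.dotProduct_mulVec_nonneg v
    have hq : (dotProduct (star v) (M *ᵥ v) : ℝ) = b := by
      simp [dotProduct, Matrix.mulVec, dotProduct, hb_def,
        Finset.mul_sum]
      apply Finset.sum_congr rfl; intro i _
      apply Finset.sum_congr rfl; intro j _; ring
    rw [hq] at this
    exact this
  have hu2 : (∑ i, u i ^ 2) = 1 := by
    simpa [dotProduct, sq] using hu
  have hs2 : (∑ i, v i ^ 2) = s := by
    simp [hs_def, dotProduct, sq]
  -- Frobenius norm squared of M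
  set F : ℝ := ∑ i, ∑ j, (M i j) ^ 2 with hF_def
  have hF0 : 0 ≤ F := Finset.sum_nonneg fun i _ => Finset.sum_nonneg fun j _ => sq_nonneg _
  have hF1 : F ≤ 1 := by
    have := Real.sqrt_le_sqrt_iff (x := F) (y := 1) -- maybe not; do directly
    nlinarith [Real.sq_sqrt hF0, Real.sqrt_nonneg F, hMF]
  -- step 1: compare with w = sqrt t • u
  have key1 : t ^ 2 ≤ 2 * b - s ^ 2 := by
    have h := hbest (Real.sqrt t • u)
    rw [expand_aux, expand_aux] at h
    have e1 : ∑ i, ∑ j, ((Real.sqrt t • u) i * (Real.sqrt t • u) j) * M i j = t * t := by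
      have : ∀ i j : Fin d, ((Real.sqrt t • u) i * (Real.sqrt t • u) j) * M i j
          = t * ((u i * u j) * M i j) := by
        intro i j
        simp only [Pi.smul_apply, smul_eq_mul]
        rw [show Real.sqrt t * u i * (Real.sqrt t * u j) * M i j
            = (Real.sqrt t * Real.sqrt t) * (u i * u j * M i j) by ring,
          Real.mul_self_sqrt htpos.le]
      simp_rw [this, ← Finset.mul_sum]
      rw [← ht_def]
    have e2 : (∑ i, ((Real.sqrt t • u) i) ^ 2) = t := by
      have : ∀ i : Fin d, ((Real.sqrt t • u) i) ^ 2 = t * u i ^ 2 := by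
        intro i
        simp [Pi.smul_apply, smul_eq_mul, mul_pow, Real.sq_sqrt htpos.le]
      simp_rw [this, ← Finset.mul_sum, hu2, mul_one]
    rw [e1, e2, hs2] at h
    nlinarith [h]
  -- hence (b/s)² ≥ t², so b/s ≥ t
  have key2 : t ≤ b / s := by
    have h1 : t ^ 2 ≤ (b / s) ^ 2 := by
      have : 2 * b - s ^ 2 ≤ (b / s) ^ 2 := by
        have h0 : 0 ≤ (b / s - s) ^ 2 := sq_nonneg _
        have : (b / s - s) ^ 2 = (b / s) ^ 2 - 2 * b + s ^ 2 := by
          field_simp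
          ring
        nlinarith [h0]
      linarith [key1]
    have hbs : 0 ≤ b / s := div_nonneg hb0 hs.le
    nlinarith [h1, hbs, htpos]
  -- the normalized vector
  set r : ℝ := (Real.sqrt s)⁻¹ with hr_def
  have hr2 : r ^ 2 = s⁻¹ := by
    rw [hr_def, ← Real.sqrt_inv]
    exact Real.sq_sqrt (inv_nonneg.mpr hs.le)
  set c : ℝ := u ⬝ᵥ (r • v) with hc_def
  have hc : c = r * (u ⬝ᵥ v) := by
    simp [hc_def, dotProduct, Finset.mul_sum]
    apply Finset.sum_congr rfl; intro i _; ring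
  -- Cauchy-Schwarz on X = u uᵀ + v̂ v̂ᵀ  against M
  have key3 : (t + s⁻¹ * b) ^ 2 ≤ (2 + 2 * c ^ 2) * F := by
    have CS := Finset.sum_mul_sq_le_sq_mul_sq (Finset.univ : Finset (Fin d × Fin d))
      (fun p => u p.1 * u p.2 + (r * v p.1) * (r * v p.2)) (fun p => M p.1 p.2)
    rw [Fintype.sum_prod_type, Fintype.sum_prod_type, Fintype.sum_prod_type] at CS
    have eL : ∑ i, ∑ j, (u i * u j + (r * v i) * (r * v j)) * M i j
        = t + s⁻¹ * b := by
      have : ∀ i j : Fin d, (u i * u j + (r * v i) * (r * v j)) * M i j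
          = (u i * u j) * M i j + r ^ 2 * ((v i * v j) * M i j) := by
        intro i j; ring
      simp_rw [this, Finset.sum_add_distrib, ← Finset.mul_sum, hr2]
      rw [← ht_def, ← hb_def]
    have eX : ∑ i, ∑ j, (u i * u j + (r * v i) * (r * v j)) ^ 2
        = 2 + 2 * c ^ 2 := by
      have hvv : (∑ i, (r * v i) ^ 2) = 1 := by
        have : ∀ i : Fin d, (r * v i) ^ 2 = r ^ 2 * v i ^ 2 := fun i => by ring
        simp_rw [this, ← Finset.mul_sum, hs2, hr2]
        field_simp
      have huv : (∑ i, u i * (r * v i)) = c := by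
        rw [hc]
        simp [dotProduct, Finset.mul_sum]
        apply Finset.sum_congr rfl; intro i _; ring
      have : ∀ i j : Fin d, (u i * u j + (r * v i) * (r * v j)) ^ 2
          = u i ^ 2 * u j ^ 2 + 2 * ((u i * (r * v i)) * (u j * (r * v j)))
            + (r * v i) ^ 2 * (r * v j) ^ 2 := by
        intro i j; ring
      simp_rw [this, Finset.sum_add_distrib, ← Finset.mul_sum, ← Finset.sum_mul, hu2, hvv, huv]
      ring
    calc (t + s⁻¹ * b) ^ 2
        = (∑ i, ∑ j, (u i * u j + (r * v i) * (r * v j)) * M i j) ^ 2 := by rw [eL]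
      _ ≤ (∑ i, ∑ j, (u i * u j + (r * v i) * (r * v j)) ^ 2)
            * (∑ i, ∑ j, (M i j) ^ 2) := CS
      _ = (2 + 2 * c ^ 2) * F := by rw [eX]
  clear_value t s b r c F
  have hbound : 2 - 2 * ε ≤ t + s⁻¹ * b := by
    have : s⁻¹ * b = b / s := by rw [div_eq_inv_mul]
    rw [this]
    linarith [ht, key2]
  have h2e : 0 < 2 - 2 * ε := by linarith
  have hfin : (2 - 2 * ε) ^ 2 ≤ 2 + 2 * c ^ 2 := by
    have h1 : (2 - 2 * ε) ^ 2 ≤ (t + s⁻¹ * b) ^ 2 := by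
      nlinarith [hbound, h2e]
    have h2 : (t + s⁻¹ * b) ^ 2 ≤ 2 + 2 * c ^ 2 := by
      have hpos : 0 ≤ 2 + 2 * c ^ 2 := by positivity
      nlinarith [key3, hF1, hpos]
    linarith
  show 1 - 8 * ε ≤ c ^ 2
  nlinarith [hfin]
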